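/- Let l be a symmetric norm on R^n, let v in S^{n-1} achieve l(v) = b_l, and let V have independent coordinates V_i ~ N(0, v_i^2). Then Pr(l(V) >= b_l/4) >= 1/10. -/

import Mathlib

open MeasureTheory ProbabilityTheory Real Filter Set Asymptotics Topology
open scoped ENNReal NNReal

lemma integrable_sq_exp : Integrable (fun x : ℝ => x ^ 2 * rexp (-(1/2) * x ^ 2)) := by
  have h := integrable_rpow_mul_exp_neg_mul_sq (b := 1/2) (by norm_num) (s := 2) (by norm_num)
  have h2 : ∀ x : ℝ, x ^ (2:ℝ) = x ^ 2 := fun x => by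
    rw [show (2:ℝ) = ((2:ℕ):ℝ) by norm_num, Real.rpow_natCast]
  simpa only [h2] using h

lemma tendsto_mul_exp : Tendsto (fun x : ℝ => x * rexp (-(1/2) * x ^ 2)) atTop (𝓝 0) := by
  have h1 := rpow_mul_exp_neg_mul_sq_isLittleO_exp_neg (b := 1/2) (by norm_num) 1
  have h2 : Tendsto (fun x : ℝ => rexp (-(1/2) * x)) atTop (𝓝 0) := by
    refine Real.tendsto_exp_atBot.comp ?_
    have : Tendsto (fun x : ℝ => (1/2) * x) atTop atTop :=
      Tendsto.const_mul_atTop (by norm_num) tendsto_id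
    exact (tendsto_neg_atTop_atBot.comp this).congr (fun x => by simp only [Function.comp_apply]; ring)
  have := h1.trans_tendsto h2
  simpa [Real.rpow_one] using this

lemma int_exp_half : ∫ x : ℝ, rexp (-(1/2) * x ^ 2) = √(2 * π) := by
  rw [integral_gaussian]
  rw [show π / (1/2) = 2 * π by ring]

lemma int_sq_exp_half : ∫ x : ℝ, x ^ 2 * rexp (-(1/2) * x ^ 2) = √(2 * π) := by
  have hderiv : ∀ x : ℝ, HasDerivAt (fun x : ℝ => -x * rexp (-(1/2) * x ^ 2))
      (x ^ 2 * rexp (-(1/2) * x ^ 2) - rexp (-(1/2) * x ^ 2)) x := by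
    intro x
    have he : HasDerivAt (fun x : ℝ => rexp (-(1/2) * x ^ 2))
        (rexp (-(1/2) * x ^ 2) * (-(1/2) * (2 * x ^ 1))) x :=
      ((hasDerivAt_pow 2 x).const_mul (-(1/2))).exp
    have h3 := ((hasDerivAt_id x).neg).mul he
    exact h3.congr_deriv (by simp only [Pi.neg_apply, id]; ring)
  have hint : Integrable (fun x : ℝ =>
      x ^ 2 * rexp (-(1/2) * x ^ 2) - rexp (-(1/2) * x ^ 2)) :=
    integrable_sq_exp.sub (by simpa using integrable_exp_neg_mul_sq (b := 1/2) (by norm_num))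
  have htop : Tendsto (fun x : ℝ => -x * rexp (-(1/2) * x ^ 2)) atTop (𝓝 0) := by
    simpa [neg_mul] using tendsto_mul_exp.neg
  have hbot : Tendsto (fun x : ℝ => -x * rexp (-(1/2) * x ^ 2)) atBot (𝓝 0) := by
    have := tendsto_mul_exp.comp tendsto_neg_atBot_atTop
    simpa [Function.comp_def, neg_mul] using this
  have h0 := integral_of_hasDerivAt_of_tendsto hderiv hint hbot htop
  rw [sub_zero] at h0
  have hsub := integral_sub integrable_sq_exp
    (by simpa using integrable_exp_neg_mul_sq (b := 1/2) (by norm_num) :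
      Integrable fun x : ℝ => rexp (-(1/2) * x ^ 2))
  rw [h0] at hsub
  have := int_exp_half
  linarith [hsub]

lemma int_abs_exp_half : ∫ x : ℝ, |x| * rexp (-(1/2) * x ^ 2) = 2 := by
  have heq : (fun x : ℝ => |x| * rexp (-(1/2) * x ^ 2))
      = fun x : ℝ => |x| * rexp (-(1/2) * |x| ^ 2) := by
    funext x; rw [sq_abs]
  rw [heq, integral_comp_abs (f := fun x : ℝ => x * rexp (-(1/2) * x ^ 2))]
  have hderiv : ∀ x ∈ Ici (0:ℝ), HasDerivAt (fun x : ℝ => -rexp (-(1/2) * x ^ 2))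
      (x * rexp (-(1/2) * x ^ 2)) x := by
    intro x _
    have he : HasDerivAt (fun x : ℝ => rexp (-(1/2) * x ^ 2))
        (rexp (-(1/2) * x ^ 2) * (-(1/2) * (2 * x ^ 1))) x :=
      ((hasDerivAt_pow 2 x).const_mul (-(1/2))).exp
    have h3 := he.neg
    exact h3.congr_deriv (by ring)
  have htop : Tendsto (fun x : ℝ => -rexp (-(1/2) * x ^ 2)) atTop (𝓝 0) := by
    have h2 : Tendsto (fun x : ℝ => -(1/2) * x ^ 2) atTop atBot := by
      have : Tendsto (fun x : ℝ => (1/2) * x ^ 2) atTop atTop :=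
        Tendsto.const_mul_atTop (by norm_num) (tendsto_pow_atTop two_ne_zero)
      exact (tendsto_neg_atTop_atBot.comp this).congr (fun x => by simp only [Function.comp_apply]; ring)
    simpa [Function.comp_def] using (Real.tendsto_exp_atBot.comp h2).neg
  have hi : IntegrableOn (fun x : ℝ => x * rexp (-(1/2) * x ^ 2)) (Ioi 0) :=
    (integrable_mul_exp_neg_mul_sq (b := 1/2) (by norm_num)).integrableOn
  have hI := integral_Ioi_of_hasDerivAt_of_tendsto' hderiv hi htop
  rw [hI]
  norm_num [Real.exp_zero]

lemma pdf_eq (x : ℝ) : gaussianPDFReal 0 1 x = (√(2 * π))⁻¹ * rexp (-(1/2) * x ^ 2) := by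
  simp only [gaussianPDFReal, NNReal.coe_one, mul_one, sub_zero]
  ring_nf

lemma gauss_density : gaussianReal 0 1
    = (volume : Measure ℝ).withDensity
      (fun x => ((gaussianPDFReal 0 1 x).toNNReal : ℝ≥0∞)) := by
  rw [gaussianReal_of_var_ne_zero 0 one_ne_zero]
  congr 1

lemma meas_pdf : Measurable (fun x => (gaussianPDFReal 0 1 x).toNNReal) :=
  (measurable_gaussianPDFReal 0 1).real_toNNReal

lemma integrable_gauss_iff {g : ℝ → ℝ} :
    Integrable g (gaussianReal 0 1)
      ↔ Integrable (fun x => gaussianPDFReal 0 1 x * g x) := by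
  rw [gauss_density, integrable_withDensity_iff_integrable_smul meas_pdf]
  constructor <;> intro h <;> refine h.congr (Filter.Eventually.of_forall fun x => ?_)
  · simp only [NNReal.smul_def, smul_eq_mul, Real.coe_toNNReal _ (gaussianPDFReal_nonneg 0 1 x)]
  · simp only [NNReal.smul_def, smul_eq_mul, Real.coe_toNNReal _ (gaussianPDFReal_nonneg 0 1 x)]

lemma integral_gauss (g : ℝ → ℝ) :
    ∫ x, g x ∂(gaussianReal 0 1) = ∫ x, gaussianPDFReal 0 1 x * g x := by
  rw [gauss_density, integral_withDensity_eq_integral_smul meas_pdf]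
  congr 1
  funext x
  simp only [NNReal.smul_def, smul_eq_mul, Real.coe_toNNReal _ (gaussianPDFReal_nonneg 0 1 x)]

lemma sqrt_two_pi_pos : 0 < √(2 * π) := Real.sqrt_pos.2 (by positivity)

lemma integrable_sq_gauss : Integrable (fun x => x ^ 2) (gaussianReal 0 1) := by
  rw [integrable_gauss_iff]
  have : (fun x => gaussianPDFReal 0 1 x * x ^ 2)
      = fun x => (√(2 * π))⁻¹ * (x ^ 2 * rexp (-(1/2) * x ^ 2)) := by
    funext x; rw [pdf_eq]; ring
  rw [this]
  exact integrable_sq_exp.const_mul _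

lemma int_sq_gauss : ∫ x, x ^ 2 ∂(gaussianReal 0 1) = 1 := by
  rw [integral_gauss]
  have h : (fun x => gaussianPDFReal 0 1 x * x ^ 2)
      = fun x => (√(2 * π))⁻¹ * (x ^ 2 * rexp (-(1/2) * x ^ 2)) := by
    funext x; rw [pdf_eq]; ring
  rw [h, integral_const_mul, int_sq_exp_half, inv_mul_cancel₀ sqrt_two_pi_pos.ne']

lemma integrable_abs_exp : Integrable (fun x : ℝ => |x| * rexp (-(1/2) * x ^ 2)) := by
  have h := (integrable_mul_exp_neg_mul_sq (b := 1/2) (by norm_num)).abs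
  refine h.congr (Filter.Eventually.of_forall fun x => ?_)
  simp only [abs_mul, abs_of_nonneg (Real.exp_pos _).le]

lemma integrable_abs_gauss : Integrable (fun x => |x|) (gaussianReal 0 1) := by
  rw [integrable_gauss_iff]
  have h : (fun x => gaussianPDFReal 0 1 x * |x|)
      = fun x => (√(2 * π))⁻¹ * (|x| * rexp (-(1/2) * x ^ 2)) := by
    funext x; rw [pdf_eq]; ring
  rw [h]
  exact integrable_abs_exp.const_mul _

lemma int_abs_gauss : ∫ x, |x| ∂(gaussianReal 0 1) = 2 / √(2 * π) := by
  rw [integral_gauss]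
  have h : (fun x => gaussianPDFReal 0 1 x * |x|)
      = fun x => (√(2 * π))⁻¹ * (|x| * rexp (-(1/2) * x ^ 2)) := by
    funext x; rw [pdf_eq]; ring
  rw [h, integral_const_mul, int_abs_exp_half]
  rw [div_eq_inv_mul]

lemma gaussianReal_sq_map (c : ℝ) :
    gaussianReal 0 (Real.toNNReal (c ^ 2)) = (gaussianReal 0 1).map (c * ·) := by
  rw [gaussianReal_map_const_mul]
  congr 1
  · ring
  · rw [mul_one]
    ext
    simp [Real.coe_toNNReal _ (sq_nonneg c)]

lemma integrable_abs_coord (c : ℝ) :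
    Integrable (fun y => |y|) (gaussianReal 0 (Real.toNNReal (c ^ 2))) := by
  rw [gaussianReal_sq_map]
  rw [integrable_map_measure continuous_abs.aestronglyMeasurable
    (measurable_const_mul c).aemeasurable]
  have h : ((fun y => |y|) ∘ (c * ·)) = fun x => |c| * |x| := by
    funext x; simp [Function.comp, abs_mul]
  rw [h]
  exact integrable_abs_gauss.const_mul _

lemma int_abs_coord (c : ℝ) :
    ∫ y, |y| ∂(gaussianReal 0 (Real.toNNReal (c ^ 2))) = |c| * (2 / √(2 * π)) := by
  rw [gaussianReal_sq_map, integral_map (measurable_const_mul c).aemeasurable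
    continuous_abs.aestronglyMeasurable]
  have h : (fun x => |c * x|) = fun x => |c| * |x| := by
    funext x; rw [abs_mul]
  rw [h, integral_const_mul, int_abs_gauss]

lemma integrable_sq_coord (c : ℝ) :
    Integrable (fun y => y ^ 2) (gaussianReal 0 (Real.toNNReal (c ^ 2))) := by
  rw [gaussianReal_sq_map]
  rw [integrable_map_measure (continuous_pow 2).aestronglyMeasurable
    (measurable_const_mul c).aemeasurable]
  have h : ((fun y => y ^ 2) ∘ (c * ·)) = fun x => c ^ 2 * x ^ 2 := by
    funext x; simp [Function.comp, mul_pow]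
  rw [h]
  exact integrable_sq_gauss.const_mul _

lemma int_sq_coord (c : ℝ) :
    ∫ y, y ^ 2 ∂(gaussianReal 0 (Real.toNNReal (c ^ 2))) = c ^ 2 := by
  rw [gaussianReal_sq_map, integral_map (measurable_const_mul c).aemeasurable
    (continuous_pow 2).aestronglyMeasurable]
  have h : (fun x => (c * x) ^ 2) = fun x => c ^ 2 * x ^ 2 := by
    funext x; rw [mul_pow]
  rw [h, integral_const_mul, int_sq_gauss, mul_one]

lemma pi_map_eval {n : ℕ} (μ : Fin n → Measure ℝ) [∀ i, IsProbabilityMeasure (μ i)]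
    (i : Fin n) : (Measure.pi μ).map (Function.eval i) = μ i := by
  ext s hs
  rw [Measure.map_apply (measurable_pi_apply i) hs, Set.eval_preimage, Measure.pi_pi]
  rw [Finset.prod_eq_single i (fun j _ hj => by simp [Function.update_of_ne hj])
    (fun h => absurd (Finset.mem_univ i) h)]
  simp

lemma integrable_eval {n : ℕ} (μ : Fin n → Measure ℝ) [∀ i, IsProbabilityMeasure (μ i)]
    (i : Fin n) {f : ℝ → ℝ} (hfm : AEStronglyMeasurable f (μ i))
    (hf : Integrable f (μ i)) :
    Integrable (fun x => f (x i)) (Measure.pi μ) := by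
  rw [← pi_map_eval μ i] at hf
  exact (integrable_map_measure hf.1 (measurable_pi_apply i).aemeasurable).1 hf

lemma integral_eval {n : ℕ} (μ : Fin n → Measure ℝ) [∀ i, IsProbabilityMeasure (μ i)]
    (i : Fin n) {f : ℝ → ℝ} (hfm : AEStronglyMeasurable f (μ i)) :
    ∫ x, f (x i) ∂(Measure.pi μ) = ∫ y, f y ∂(μ i) := by
  rw [← pi_map_eval μ i, integral_map (measurable_pi_apply i).aemeasurable]
  rwa [pi_map_eval]

lemma l_sum_le {n : ℕ} (l : (Fin n → ℝ) → ℝ) (h0 : l 0 = 0)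
    (htri : ∀ x y, l (x + y) ≤ l x + l y) {ι : Type*} (s : Finset ι)
    (f : ι → (Fin n → ℝ)) :
    l (∑ i ∈ s, f i) ≤ ∑ i ∈ s, l (f i) := by
  induction s using Finset.cons_induction with
  | empty => simp [h0]
  | cons a s ha ih =>
    rw [Finset.sum_cons, Finset.sum_cons]
    exact le_trans (htri _ _) (by linarith)

/-- If `v ∈ S^{n-1}` achieves the maximum `b` of a symmetric norm `l` on the
unit sphere, and `V` has independent coordinates `V i ~ N(0, (v i)^2)`, then
`Pr(l V ≥ b/4) ≥ 1/10`. -/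
theorem tail_bound_norm_of_randomized_maximizer {n : ℕ} (l : (Fin n → ℝ) → ℝ)
    (htri : ∀ x y, l (x + y) ≤ l x + l y)
    (hhom : ∀ (c : ℝ) x, l (c • x) = |c| * l x)
    (hdef : ∀ x, l x = 0 ↔ x = 0)
    (hperm : ∀ (σ : Equiv.Perm (Fin n)) x, l (fun i => x (σ i)) = l x)
    (hsign : ∀ x, l (fun i => |x i|) = l x)
    (b : ℝ) (hb : IsGreatest (l '' {x : Fin n → ℝ | ∑ i, (x i) ^ 2 = 1}) b)
    (v : Fin n → ℝ) (hv : ∑ i, (v i) ^ 2 = 1) (hvb : l v = b) :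
    (1 / 10 : ℝ≥0∞) ≤
      (Measure.pi fun i => gaussianReal 0 (Real.toNNReal ((v i) ^ 2))) {x | b / 4 ≤ l x} := by
  classical
  set κ : ℝ := 2 / √(2 * π) with hκdef
  have hκnn : 0 ≤ κ := by positivity
  set μv : Fin n → Measure ℝ := fun i => gaussianReal 0 (Real.toNNReal ((v i) ^ 2)) with hμv
  set P : Measure (Fin n → ℝ) := Measure.pi μv with hPdef
  haveI : IsProbabilityMeasure P := by rw [hPdef]; infer_instance
  -- basic facts about l
  have l0 : l 0 = 0 := by simpa using hhom 0 0
  have lneg : ∀ x, l (-x) = l x := fun x => by simpa using hhom (-1) x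
  have lnn : ∀ x, 0 ≤ l x := by
    intro x
    have h1 := htri x (-x)
    rw [show x + (-x) = 0 from by abel, l0, lneg] at h1
    linarith
  -- b > 0
  have hvne : v ≠ 0 := by
    intro h
    rw [h] at hv
    simp at hv
  have hbpos : 0 < b := by
    rcases lt_or_eq_of_le (hvb ▸ lnn v) with h | h
    · exact h
    · exact absurd ((hdef v).1 (hvb.trans h.symm)) hvne
  -- coordinate bound constants
  set C : Fin n → ℝ := fun i => l (Pi.single i 1) with hCdef
  have hCnn : ∀ i, 0 ≤ C i := fun i => lnn _
  have hsingle : ∀ (i : Fin n) (t : ℝ), l (Pi.single i t) = |t| * C i := by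
    intro i t
    have h : Pi.single i t = t • (Pi.single i 1 : Fin n → ℝ) := by
      funext j
      by_cases h : j = i
      · subst h; simp
      · simp [Pi.single_eq_of_ne h]
    rw [h, hhom]
  have hdom : ∀ x, l x ≤ ∑ i, C i * |x i| := by
    intro x
    have h1 : l x ≤ ∑ i, l (Pi.single i (x i)) := by
      conv_lhs => rw [show x = ∑ i, Pi.single i (x i) from (Finset.univ_sum_single x).symm]
      exact l_sum_le l l0 htri _ _
    refine h1.trans (le_of_eq (Finset.sum_congr rfl fun i _ => ?_))
    rw [hsingle]; ring
  -- continuity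
  have hlxy : ∀ x y, |l x - l y| ≤ l (x - y) := by
    intro x y
    have h1 := htri y (x - y)
    rw [show y + (x - y) = x from by abel] at h1
    have h2 := htri x (y - x)
    rw [show x + (y - x) = y from by abel] at h2
    have h3 : l (y - x) = l (x - y) := by rw [← neg_sub x y, lneg]
    rw [abs_sub_le_iff]
    constructor <;> linarith
  have hcont : Continuous l := by
    have hlip : LipschitzWith (Real.toNNReal (∑ i, C i)) l := by
      apply LipschitzWith.of_dist_le_mul
      intro x y
      rw [Real.dist_eq, Real.coe_toNNReal _ (Finset.sum_nonneg fun i _ => hCnn i)]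
      refine (hlxy x y).trans ((hdom (x - y)).trans ?_)
      rw [Finset.sum_mul]
      refine Finset.sum_le_sum fun i _ => ?_
      refine mul_le_mul_of_nonneg_left ?_ (hCnn i)
      rw [show (x - y) i = x i - y i from rfl, ← Real.dist_eq]
      exact dist_le_pi_dist x y i
    exact hlip.continuous
  -- l ≤ b * ℓ2 norm
  have hl2 : ∀ x, l x ≤ b * √(∑ i, (x i) ^ 2) := by
    intro x
    by_cases hx : x = 0
    · subst hx; simp [l0]
    · have hs : 0 < ∑ i, (x i) ^ 2 := by
        obtain ⟨i, hi⟩ := Function.ne_iff.1 hx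
        exact Finset.sum_pos' (fun j _ => sq_nonneg _) ⟨i, Finset.mem_univ i, by nlinarith [abs_pos.2 hi, sq_abs (x i)]⟩
      set r := √(∑ i, (x i) ^ 2) with hr
      have hrpos : 0 < r := Real.sqrt_pos.2 hs
      have hmem : (∑ i, ((r⁻¹ • x) i) ^ 2) = 1 := by
        simp only [Pi.smul_apply, smul_eq_mul, mul_pow]
        rw [← Finset.mul_sum, inv_pow, hr, Real.sq_sqrt hs.le, inv_mul_cancel₀ hs.ne']
      have hu : l (r⁻¹ • x) ≤ b := hb.2 ⟨r⁻¹ • x, hmem, rfl⟩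
      have hx2 : l x = r * l (r⁻¹ • x) := by
        rw [hhom, abs_of_nonneg (inv_nonneg.2 hrpos.le)]
        field_simp
      rw [hx2, mul_comm b r]
      exact mul_le_mul_of_nonneg_left hu hrpos.le
  -- integrabilities
  have habsint : ∀ i : Fin n, Integrable (fun x : Fin n → ℝ => |x i|) P :=
    fun i => integrable_eval μv i continuous_abs.aestronglyMeasurable (integrable_abs_coord (v i))
  have hsqint : ∀ i : Fin n, Integrable (fun x : Fin n → ℝ => (x i) ^ 2) P :=
    fun i => integrable_eval μv i (continuous_pow 2).aestronglyMeasurable (integrable_sq_coord (v i))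
  have hintl : Integrable l P := by
    refine Integrable.mono' (integrable_finset_sum Finset.univ
      (fun i _ => (habsint i).const_mul (C i))) hcont.aestronglyMeasurable
      (Filter.Eventually.of_forall fun x => ?_)
    rw [Real.norm_eq_abs, abs_of_nonneg (lnn x)]
    exact hdom x
  have hintlsq : Integrable (fun x => (l x) ^ 2) P := by
    refine Integrable.mono' ((integrable_finset_sum Finset.univ
      (fun i (_ : i ∈ Finset.univ) => hsqint i)).const_mul (b ^ 2))
      ((hcont.pow 2).aestronglyMeasurable) (Filter.Eventually.of_forall fun x => ?_)
    rw [Real.norm_eq_abs, abs_of_nonneg (sq_nonneg _)]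
    calc (l x) ^ 2 ≤ (b * √(∑ i, (x i) ^ 2)) ^ 2 := pow_le_pow_left₀ (lnn x) (hl2 x) 2
      _ = b ^ 2 * ∑ i, (x i) ^ 2 := by
          rw [mul_pow, Real.sq_sqrt (Finset.sum_nonneg fun i _ => sq_nonneg _)]
  -- Jensen
  set F : (Fin n → ℝ) → (Fin n → ℝ) := fun x => fun i => |x i| with hFdef
  have hFcont : Continuous F := continuous_pi fun i => (continuous_apply i).abs
  have hFint : Integrable F P := by
    refine Integrable.mono' (integrable_finset_sum Finset.univ
      (fun i (_ : i ∈ Finset.univ) => habsint i)) hFcont.aestronglyMeasurable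
      (Filter.Eventually.of_forall fun x => ?_)
    refine (pi_norm_le_iff_of_nonneg (Finset.sum_nonneg fun i _ => abs_nonneg _)).2 fun i => ?_
    rw [show F x i = |x i| from rfl, Real.norm_eq_abs, abs_abs]
    exact Finset.single_le_sum (fun j (_ : j ∈ Finset.univ) => abs_nonneg (x j)) (Finset.mem_univ i)
  have hconv : ConvexOn ℝ Set.univ l := by
    refine ⟨convex_univ, fun x _ y _ a c ha hc hac => ?_⟩
    calc l (a • x + c • y) ≤ l (a • x) + l (c • y) := htri _ _
      _ = a * l x + c * l y := by rw [hhom, hhom, abs_of_nonneg ha, abs_of_nonneg hc]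
      _ = a • l x + c • l y := by simp [smul_eq_mul]
  have hgi : Integrable (fun x => l (F x)) P :=
    hintl.congr (Filter.Eventually.of_forall fun x => (hsign x).symm)
  have hjen := hconv.map_integral_le hcont.continuousOn isClosed_univ
    (Filter.Eventually.of_forall fun x => Set.mem_univ _) hFint hgi
  have hFval : (∫ x, F x ∂P) = fun i => |v i| * κ := by
    funext i
    have hpr := (ContinuousLinearMap.proj (R := ℝ) (φ := fun _ : Fin n => ℝ)
      i).integral_comp_comm hFint
    have he : (fun x : Fin n → ℝ => (ContinuousLinearMap.proj (R := ℝ)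
        (φ := fun _ : Fin n => ℝ) i) (F x)) = fun x : Fin n → ℝ => |x i| := rfl
    rw [show (∫ x, F x ∂P) i = (ContinuousLinearMap.proj (R := ℝ)
      (φ := fun _ : Fin n => ℝ) i) (∫ x, F x ∂P) from rfl, ← hpr, he,
      integral_eval μv i continuous_abs.aestronglyMeasurable, int_abs_coord (v i)]
  have hm : κ * b ≤ ∫ x, l x ∂P := by
    have h1 : l (∫ x, F x ∂P) = κ * b := by
      rw [hFval]
      have h2 : (fun i => |v i| * κ) = κ • (fun i => |v i|) := by
        funext i; simp [mul_comm]
      rw [h2, hhom, abs_of_nonneg hκnn, hsign, hvb]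
    have h2 : ∫ x, l (F x) ∂P = ∫ x, l x ∂P :=
      integral_congr_ae (Filter.Eventually.of_forall fun x => hsign x)
    rw [← h1, ← h2]
    exact hjen
  -- second moment
  have hintS : Integrable (fun x : Fin n → ℝ => ∑ i, (x i) ^ 2) P :=
    integrable_finset_sum Finset.univ (fun i (_ : i ∈ Finset.univ) => hsqint i)
  have hq : ∫ x, (l x) ^ 2 ∂P ≤ b ^ 2 := by
    have hfun : ∀ x, (l x) ^ 2 ≤ b ^ 2 * ∑ i, (x i) ^ 2 := by
      intro x
      calc (l x) ^ 2 ≤ (b * √(∑ i, (x i) ^ 2)) ^ 2 := pow_le_pow_left₀ (lnn x) (hl2 x) 2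
        _ = b ^ 2 * ∑ i, (x i) ^ 2 := by
            rw [mul_pow, Real.sq_sqrt (Finset.sum_nonneg fun i _ => sq_nonneg _)]
    calc ∫ x, (l x) ^ 2 ∂P ≤ ∫ x, b ^ 2 * ∑ i, (x i) ^ 2 ∂P :=
          integral_mono hintlsq (hintS.const_mul _) hfun
      _ = b ^ 2 * ∑ i, (v i) ^ 2 := by
          rw [integral_const_mul]
          congr 1
          rw [integral_finset_sum Finset.univ (fun i (_ : i ∈ Finset.univ) => hsqint i)]
          exact Finset.sum_congr rfl fun i _ => by
            rw [integral_eval μv i (continuous_pow 2).aestronglyMeasurable, int_sq_coord (v i)]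
      _ = b ^ 2 := by rw [hv, mul_one]
  -- indicator decomposition
  set A : Set (Fin n → ℝ) := {x | b / 4 ≤ l x} with hAdef
  have hAm : MeasurableSet A := measurableSet_le measurable_const hcont.measurable
  set a : ℝ := (P A).toReal with hadef
  have hpt : ∀ x, l x ≤ b / 4 + (l x) ^ 2 / (6 * b) + (3 * b / 2) * A.indicator (fun _ => (1:ℝ)) x := by
    intro x
    have h6 : (0:ℝ) < 6 * b := by linarith
    by_cases hx : x ∈ A
    · rw [Set.indicator_of_mem hx]
      have key : (l x - 3 * b) ^ 2 / (6 * b) = (l x) ^ 2 / (6 * b) - l x + 3 * b / 2 := by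
        field_simp
        ring
      have h7 := div_nonneg (sq_nonneg (l x - 3 * b)) h6.le
      rw [key] at h7
      linarith
    · rw [Set.indicator_of_notMem hx]
      have h8 : l x < b / 4 := lt_of_not_ge hx
      have h9 := div_nonneg (sq_nonneg (l x)) h6.le
      linarith
  have hind : Integrable (fun x => b / 4 + (l x) ^ 2 / (6 * b)
      + (3 * b / 2) * A.indicator (fun _ => (1:ℝ)) x) P := by
    refine ((integrable_const _).add (hintlsq.div_const _)).add ?_
    exact (((integrable_const (1:ℝ)).indicator hAm)).const_mul _
  have hup : ∫ x, l x ∂P ≤ b / 4 + (∫ x, (l x) ^ 2 ∂P) / (6 * b) + (3 * b / 2) * a := by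
    refine le_trans (integral_mono hintl hind hpt) (le_of_eq ?_)
    have hc : Integrable (fun _ : Fin n → ℝ => b / 4) P := integrable_const _
    have hf2 : Integrable (fun x : Fin n → ℝ => (l x) ^ 2 / (6 * b)) P := hintlsq.div_const _
    have hf1 : Integrable (fun x : Fin n → ℝ => b / 4 + (l x) ^ 2 / (6 * b)) P := hc.add hf2
    have hg1 : Integrable (fun x : Fin n → ℝ =>
        (3 * b / 2) * A.indicator (fun _ => (1:ℝ)) x) P :=
      ((integrable_const (1:ℝ)).indicator hAm).const_mul _
    simp only [integral_add hf1 hg1, integral_add hc hf2, integral_const, integral_div,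
      integral_const_mul, integral_indicator_const (1:ℝ) hAm]
    simp [measure_univ, smul_eq_mul]
    exact Or.inl rfl
  -- numerics
  have hk : (17:ℝ) / 30 ≤ κ := by
    have h251 : √(2 * π) < 2.51 := by
      rw [show (2.51:ℝ) = √(2.51 ^ 2) from (Real.sqrt_sq (by norm_num)).symm]
      apply Real.sqrt_lt_sqrt (by positivity)
      nlinarith [Real.pi_lt_d2]
    rw [hκdef, le_div_iff₀ sqrt_two_pi_pos]
    nlinarith [sqrt_two_pi_pos]
  have ha : (1:ℝ) / 10 ≤ a := by
    have h1 : κ * b ≤ b / 4 + b ^ 2 / (6 * b) + (3 * b / 2) * a := by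
      refine hm.trans (hup.trans ?_)
      have h6 : (0:ℝ) < 6 * b := by linarith
      exact add_le_add (add_le_add le_rfl ((div_le_div_iff_of_pos_right h6).2 hq)) le_rfl
    have h2 : b ^ 2 / (6 * b) = b / 6 := by
      field_simp
    rw [h2] at h1
    nlinarith [hbpos, mul_le_mul_of_nonneg_right hk hbpos.le]
  -- conclude in ℝ≥0∞
  have h1 : ENNReal.ofReal (1 / 10) ≤ ENNReal.ofReal a := ENNReal.ofReal_le_ofReal ha
  rw [hadef, ENNReal.ofReal_toReal (measure_ne_top P A)] at h1
  refine le_trans (le_of_eq ?_) h1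
  rw [ENNReal.ofReal_div_of_pos (by norm_num), ENNReal.ofReal_one, ENNReal.ofReal_ofNat]
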